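/- arXiv:1309.4174 — 2 statements merged into one kernel-verified Lean document; each statement's English description precedes it below -/
import Mathlib

section
/- Let f and g be Weierstrass (distinguished) polynomials in Zp[T] and let a, b be non-negative integers. If p^a·f and p^b·g generate the same ideal in the power series ring Zp[[T]], then a = b, the ideals (f) and (g) of Zp[[T]] are equal, and deg f = deg g. -/
open PowerSeries

/-- A Weierstrass (distinguished) polynomial with respect to `π`:
a monic polynomial all of whose lower coefficients are divisible by `π`. -/
def Polynomial.IsWeierstrassAt {R : Type*} [CommRing R] (f : Polynomial R) (π : R) : Prop :=
  f.Monic ∧ ∀ i < f.natDegree, π ∣ f.coeff i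

variable (p : ℕ) [Fact p.Prime]

lemma toZMod_eq_zero_iff (x : ℤ_[p]) : PadicInt.toZMod x = 0 ↔ (p : ℤ_[p]) ∣ x := by
  rw [← RingHom.mem_ker, PadicInt.ker_toZMod, PadicInt.maximalIdeal_eq_span_p,
    Ideal.mem_span_singleton]

noncomputable abbrev psi : PowerSeries ℤ_[p] →+* PowerSeries (ZMod p) :=
  PowerSeries.map (PadicInt.toZMod)

lemma hpsi_p : (psi p) (p : PowerSeries ℤ_[p]) = 0 := by
  rw [map_natCast, ← map_natCast (PowerSeries.C (R := ZMod p)) p, ZMod.natCast_self, map_zero]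

lemma psi_eq_zero_iff (s : PowerSeries ℤ_[p]) :
    psi p s = 0 ↔ (p : PowerSeries ℤ_[p]) ∣ s := by
  constructor
  · intro hs
    have hc : ∀ n, (p : ℤ_[p]) ∣ PowerSeries.coeff n s := by
      intro n
      rw [← toZMod_eq_zero_iff]
      have := congrArg (PowerSeries.coeff n) hs
      simpa using this
    refine ⟨PowerSeries.mk (fun n => (hc n).choose), ?_⟩
    ext n
    rw [show (p : PowerSeries ℤ_[p]) = PowerSeries.C (p : ℤ_[p]) from
      (map_natCast (PowerSeries.C (R := ℤ_[p])) p).symm]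
    rw [PowerSeries.coeff_C_mul, PowerSeries.coeff_mk]
    exact (hc n).choose_spec
  · rintro ⟨t, rfl⟩
    rw [map_mul, show (psi p) (p : PowerSeries ℤ_[p]) = 0 from hpsi_p p, zero_mul]

lemma p_ne_zero_ps : (p : PowerSeries ℤ_[p]) ≠ 0 := by
  have h1 : (p : ℤ_[p]) ≠ 0 := Nat.cast_ne_zero.mpr (Fact.out : p.Prime).ne_zero
  rw [← map_natCast (PowerSeries.C (R := ℤ_[p])) p]
  exact fun hc => h1 (PowerSeries.C_injective (by simpa using hc))

lemma psi_weier (f : Polynomial ℤ_[p]) (hf : f.IsWeierstrassAt (p : ℤ_[p])) :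
    psi p (f : PowerSeries ℤ_[p]) = (X : PowerSeries (ZMod p)) ^ f.natDegree := by
  ext n
  rw [PowerSeries.coeff_map, Polynomial.coeff_coe, PowerSeries.coeff_X_pow]
  rcases lt_trichotomy n f.natDegree with h | h | h
  · rw [if_neg h.ne, (toZMod_eq_zero_iff p _).mpr (hf.2 n h)]
  · rw [if_pos h, h, hf.1.coeff_natDegree, map_one]
  · rw [if_neg h.ne', Polynomial.coeff_eq_zero_of_natDegree_lt h, map_zero]

lemma aux_main (f g : Polynomial ℤ_[p])
    (hf : f.IsWeierstrassAt (p : ℤ_[p])) (hg : g.IsWeierstrassAt (p : ℤ_[p]))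
    (a b : ℕ) (hab : a ≤ b) (u : (PowerSeries ℤ_[p])ˣ)
    (hu : (p : PowerSeries ℤ_[p]) ^ a * (f : PowerSeries ℤ_[p]) * u =
      (p : PowerSeries ℤ_[p]) ^ b * (g : PowerSeries ℤ_[p])) :
    a = b ∧
      Ideal.span {(f : PowerSeries ℤ_[p])} = Ideal.span {(g : PowerSeries ℤ_[p])} ∧
      f.natDegree = g.natDegree := by
  have hpow : (p : PowerSeries ℤ_[p]) ^ b =
      (p : PowerSeries ℤ_[p]) ^ a * (p : PowerSeries ℤ_[p]) ^ (b - a) := by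
    rw [← pow_add, Nat.add_sub_cancel' hab]
  have key : (f : PowerSeries ℤ_[p]) * u = (p : PowerSeries ℤ_[p]) ^ (b - a) * g := by
    have := hu
    rw [hpow, mul_assoc, mul_assoc] at this
    exact mul_left_cancel₀ (pow_ne_zero a (p_ne_zero_ps p))
      (by rw [← mul_assoc] at this; rw [← mul_assoc]; exact this)
  have hψu : IsUnit (psi p (u : PowerSeries ℤ_[p])) := u.isUnit.map _
  have keyψ : (X : PowerSeries (ZMod p)) ^ f.natDegree * psi p (u : PowerSeries ℤ_[p]) =
      (0 : PowerSeries (ZMod p)) ^ (b - a) * (X : PowerSeries (ZMod p)) ^ g.natDegree := by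
    have := congrArg (psi p) key
    rw [map_mul, map_mul, map_pow, psi_weier p f hf, psi_weier p g hg, hpsi_p p] at this
    exact this
  have hba : b - a = 0 := by
    by_contra hne
    rw [zero_pow hne, zero_mul, mul_eq_zero] at keyψ
    rcases keyψ with h0 | h0
    · exact pow_ne_zero _ PowerSeries.X_ne_zero h0
    · exact hψu.ne_zero h0
  have hab' : a = b := le_antisymm hab (Nat.le_of_sub_eq_zero hba)
  rw [hba, pow_zero, one_mul] at key
  rw [hba, pow_zero, one_mul] at keyψ
  refine ⟨hab', ?_, ?_⟩
  · rw [Ideal.span_singleton_eq_span_singleton]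
    exact ⟨u, key⟩
  · have horder := congrArg PowerSeries.order keyψ
    rw [PowerSeries.order_mul, PowerSeries.order_X_pow, PowerSeries.order_X_pow,
      PowerSeries.order_zero_of_unit hψu, add_zero] at horder
    exact_mod_cast horder

/-- If p^a·f and p^b·g generate the same ideal of ℤp[[T]], with f, g Weierstrass
polynomials, then a = b, (f) = (g), and deg f = deg g. -/
theorem weierstrass_span_eq_iff (p : ℕ) [Fact p.Prime] (f g : Polynomial ℤ_[p])
    (hf : f.IsWeierstrassAt (p : ℤ_[p])) (hg : g.IsWeierstrassAt (p : ℤ_[p]))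
    (a b : ℕ)
    (h : Ideal.span {(p : PowerSeries ℤ_[p]) ^ a * (f : PowerSeries ℤ_[p])} =
         Ideal.span {(p : PowerSeries ℤ_[p]) ^ b * (g : PowerSeries ℤ_[p])}) :
    a = b ∧
      Ideal.span {(f : PowerSeries ℤ_[p])} = Ideal.span {(g : PowerSeries ℤ_[p])} ∧
      f.natDegree = g.natDegree := by
  rw [Ideal.span_singleton_eq_span_singleton] at h
  rcases le_total a b with hab | hab
  · obtain ⟨u, hu⟩ := h
    exact aux_main p f g hf hg a b hab u hu
  · obtain ⟨u, hu⟩ := h.symm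
    obtain ⟨h1, h2, h3⟩ := aux_main p g f hg hf b a hab u hu
    exact ⟨h1.symm, h2.symm, h3.symm⟩
end

section
/- If f is a Weierstrass polynomial in Zp[T] of degree n, then the quotient Zp[[T]]/(f) is a free Zp-module of rank n; in particular rank_{Zp} Zp[[T]]/(f) = deg f. -/
set_option maxHeartbeats 1000000

open PowerSeries

namespace WPFAux

variable {p : ℕ} [Fact p.Prime]

/-- Shift a power series down by `n`. -/
noncomputable def τ (n : ℕ) (x : PowerSeries ℤ_[p]) : PowerSeries ℤ_[p] :=
  PowerSeries.mk fun m => coeff (m + n) x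

@[simp] lemma coeff_τ (n m : ℕ) (x : PowerSeries ℤ_[p]) :
    coeff m (τ n x) = coeff (m + n) x := coeff_mk _ _

lemma τ_sub (n : ℕ) (x y : PowerSeries ℤ_[p]) : τ n (x - y) = τ n x - τ n y := by
  ext m; simp

lemma τ_mul_X_pow (n : ℕ) (x : PowerSeries ℤ_[p]) : τ n (x * X ^ n) = x := by
  ext m; simp [coeff_mul_X_pow]

/-- coefficients all divisible by `p^k` -/
def P (k : ℕ) (x : PowerSeries ℤ_[p]) : Prop := ∀ m, (p : ℤ_[p]) ^ k ∣ coeff m x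

lemma P_step {u : PowerSeries ℤ_[p]} (hu : ∀ i, (p : ℤ_[p]) ∣ coeff i u)
    {k : ℕ} {x : PowerSeries ℤ_[p]} (hx : P k x) (n : ℕ) : P (k + 1) (τ n (u * x)) := by
  intro m
  rw [coeff_τ, coeff_mul]
  refine Finset.dvd_sum fun ij _ => ?_
  rw [pow_succ']
  exact mul_dvd_mul (hu ij.1) (hx ij.2)

lemma P_iterate {u : PowerSeries ℤ_[p]} (hu : ∀ i, (p : ℤ_[p]) ∣ coeff i u)
    (n : ℕ) (t : PowerSeries ℤ_[p]) (k : ℕ) : P k ((fun x => τ n (u * x))^[k] t) := by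
  induction k with
  | zero => intro m; simp
  | succ k ih =>
      rw [Function.iterate_succ_apply']
      exact P_step hu ih n

lemma norm_le_of_dvd {k : ℕ} {z : ℤ_[p]} (h : (p : ℤ_[p]) ^ k ∣ z) : ‖z‖ ≤ ((p : ℝ)⁻¹) ^ k := by
  have := (PadicInt.norm_le_pow_iff_mem_span_pow z k).2 (Ideal.mem_span_singleton.2 h)
  rwa [zpow_neg, zpow_natCast, ← inv_pow] at this

lemma eq_zero_of_forall_dvd {z : ℤ_[p]} (h : ∀ k : ℕ, (p : ℤ_[p]) ^ k ∣ z) : z = 0 := by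
  have h2 : ∀ k : ℕ, ‖z‖ ≤ ((p : ℝ)⁻¹) ^ k := fun k => norm_le_of_dvd (h k)
  have hp : (0 : ℝ) ≤ (p : ℝ)⁻¹ := by positivity
  have hp1 : (p : ℝ)⁻¹ < 1 := by
    rw [inv_lt_one_iff₀]; right; exact_mod_cast (Fact.out : p.Prime).one_lt
  have := ge_of_tendsto (tendsto_pow_atTop_nhds_zero_of_lt_one hp hp1)
    (Filter.Eventually.of_forall h2)
  exact norm_eq_zero.1 (le_antisymm this (norm_nonneg z))

lemma summable_aux {u : PowerSeries ℤ_[p]} (hu : ∀ i, (p : ℤ_[p]) ∣ coeff i u)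
    (n : ℕ) (t : PowerSeries ℤ_[p]) (m : ℕ) :
    Summable fun k => coeff m ((fun x => τ n (u * x))^[k] t) := by
  refine Summable.of_norm_bounded (g := fun k => ((p : ℝ)⁻¹) ^ k) ?_ ?_
  · refine summable_geometric_of_lt_one (by positivity) ?_
    rw [inv_lt_one_iff₀]; right; exact_mod_cast (Fact.out : p.Prime).one_lt
  · intro k
    exact norm_le_of_dvd (P_iterate hu n t k m)

/-- The solution of `q = τ n (u * q) + t`. -/
noncomputable def Q (u : PowerSeries ℤ_[p]) (n : ℕ) (t : PowerSeries ℤ_[p]) : PowerSeries ℤ_[p] :=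
  PowerSeries.mk fun m => ∑' k, coeff m ((fun x => τ n (u * x))^[k] t)

lemma Q_spec {u : PowerSeries ℤ_[p]} (hu : ∀ i, (p : ℤ_[p]) ∣ coeff i u)
    (n : ℕ) (t : PowerSeries ℤ_[p]) : Q u n t = τ n (u * Q u n t) + t := by
  set ψ : PowerSeries ℤ_[p] → PowerSeries ℤ_[p] := fun x => τ n (u * x) with hψ
  ext m
  have hsum := summable_aux hu n t
  have key : coeff m (ψ (Q u n t)) = ∑' k, coeff m (ψ^[k+1] t) := by
    rw [hψ]
    simp only [coeff_τ, coeff_mul]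
    have : ∀ ij ∈ Finset.HasAntidiagonal.antidiagonal (m + n),
        coeff ij.1 u * coeff ij.2 (Q u n t)
          = ∑' k, coeff ij.1 u * coeff ij.2 (ψ^[k] t) := by
      intro ij _
      rw [Q, coeff_mk, ← (hsum ij.2).tsum_mul_left]
    rw [Finset.sum_congr rfl this, ← Summable.tsum_finsetSum (fun ij _ => ((hsum ij.2).mul_left _))]
    congr 1
    ext k
    rw [Function.iterate_succ_apply', hψ, coeff_τ, coeff_mul]
  rw [map_add, key, Q, coeff_mk, Summable.tsum_eq_zero_add (hsum m)]
  simp [add_comm]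
  rfl

lemma Q_unique {u q : PowerSeries ℤ_[p]} (hu : ∀ i, (p : ℤ_[p]) ∣ coeff i u)
    (n : ℕ) (hq : q = τ n (u * q)) : q = 0 := by
  have hP : ∀ k, P k q := by
    intro k
    induction k with
    | zero => intro m; simp
    | succ k ih => rw [hq]; exact P_step hu ih n
  ext m
  simpa using eq_zero_of_forall_dvd (fun k => hP k m)

end WPFAux

/-- If f is a Weierstrass polynomial of degree n over ℤp, then ℤp[[T]]/(f)
is a free ℤp-module of rank n. -/
theorem quotient_weierstrass_free_rank (p : ℕ) [Fact p.Prime] (f : Polynomial ℤ_[p])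
    (hf : f.IsWeierstrassAt (p : ℤ_[p])) (n : ℕ) (hn : f.natDegree = n) :
    Module.Free ℤ_[p] (PowerSeries ℤ_[p] ⧸ Ideal.span {(f : PowerSeries ℤ_[p])}) ∧
      Module.finrank ℤ_[p] (PowerSeries ℤ_[p] ⧸ Ideal.span {(f : PowerSeries ℤ_[p])}) = n := by
  classical
  obtain ⟨hmonic, hdvd⟩ := hf
  set F : PowerSeries ℤ_[p] := (f : PowerSeries ℤ_[p]) with hF
  set u : PowerSeries ℤ_[p] := X ^ n - F with hu'
  -- all coefficients of u are divisible by p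
  have hu : ∀ i, (p : ℤ_[p]) ∣ PowerSeries.coeff i u := by
    intro i
    rw [hu', map_sub, Polynomial.coeff_coe, coeff_X_pow]
    rcases lt_trichotomy i n with h | h | h
    · rw [if_neg h.ne]
      simpa using (hdvd i (hn ▸ h)).neg_right
    · subst h
      rw [if_pos rfl]
      have : f.coeff i = 1 := by rw [← hn] at *; exact hmonic.coeff_natDegree
      simp [this]
    · rw [if_neg h.ne', Polynomial.coeff_eq_zero_of_natDegree_lt (hn ▸ h)]
      simp
  have hFu : F = X ^ n - u := by rw [hu']; ring
  have tau_mul_F : ∀ q : PowerSeries ℤ_[p],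
      WPFAux.τ n (q * F) = q - WPFAux.τ n (u * q) := by
    intro q
    have : q * F = q * X ^ n - u * q := by rw [hFu]; ring
    rw [this, WPFAux.τ_sub, WPFAux.τ_mul_X_pow]
  -- division: for any g there is q with g - q * F having zero coefficients ≥ n
  have division : ∀ g : PowerSeries ℤ_[p], ∃ q : PowerSeries ℤ_[p],
      WPFAux.τ n (g - q * F) = 0 := by
    intro g
    refine ⟨WPFAux.Q u n (WPFAux.τ n g), ?_⟩
    have hqs := WPFAux.Q_spec hu n (WPFAux.τ n g)
    rw [WPFAux.τ_sub, tau_mul_F, sub_eq_zero]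
    exact (sub_eq_of_eq_add' hqs).symm
  -- uniqueness: if τ n s = 0 and s ∈ span {F} then s = 0
  have uniqueness : ∀ s : PowerSeries ℤ_[p], WPFAux.τ n s = 0 →
      s ∈ Ideal.span {F} → s = 0 := by
    intro s hs hmem
    obtain ⟨q, rfl⟩ := Ideal.mem_span_singleton'.1 hmem
    have h1 : q = WPFAux.τ n (u * q) := by
      have := tau_mul_F q
      rw [hs] at this
      exact sub_eq_zero.1 this.symm
    rw [WPFAux.Q_unique hu n h1, zero_mul]
  -- coefficient computation for sums of monomials
  have coeff_sum : ∀ (c : Fin n → ℤ_[p]) (j : ℕ),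
      coeff j (∑ i : Fin n, c i • (X : PowerSeries ℤ_[p]) ^ (i : ℕ)) =
        if h : j < n then c ⟨j, h⟩ else 0 := by
    intro c j
    rw [map_sum]
    by_cases h : j < n
    · rw [dif_pos h, Finset.sum_eq_single (⟨j, h⟩ : Fin n)]
      · simp [coeff_X_pow]
      · intro i _ hi
        have : j ≠ (i : ℕ) := by
          intro hji; exact hi (by ext; simp [← hji])
        simp [coeff_X_pow, this]
      · simp
    · rw [dif_neg h]
      refine Finset.sum_eq_zero fun i _ => ?_
      have : j ≠ (i : ℕ) := fun hji => h (hji ▸ i.isLt)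
      simp [coeff_X_pow, this]
  -- a power series with vanishing shift is the sum of its low monomials
  have tau_zero_eq_sum : ∀ s : PowerSeries ℤ_[p], WPFAux.τ n s = 0 →
      s = ∑ i : Fin n, (coeff (i : ℕ) s) • (X : PowerSeries ℤ_[p]) ^ (i : ℕ) := by
    intro s hs
    ext j
    rw [coeff_sum]
    by_cases h : j < n
    · rw [dif_pos h]
    · rw [dif_neg h]
      have := congrArg (coeff (j - n)) hs
      rw [WPFAux.coeff_τ, Nat.sub_add_cancel (not_lt.1 h)] at this
      simpa using this
  set I : Ideal (PowerSeries ℤ_[p]) := Ideal.span {F} with hI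
  set v : Fin n → (PowerSeries ℤ_[p] ⧸ I) :=
    fun i => Ideal.Quotient.mkₐ ℤ_[p] I ((X : PowerSeries ℤ_[p]) ^ (i : ℕ)) with hv
  have hli : LinearIndependent ℤ_[p] v := by
    rw [Fintype.linearIndependent_iff]
    intro c hc
    set s : PowerSeries ℤ_[p] := ∑ i : Fin n, c i • (X : PowerSeries ℤ_[p]) ^ (i : ℕ) with hs
    have hmk : Ideal.Quotient.mkₐ ℤ_[p] I s = 0 := by
      rw [hs, map_sum]
      simpa [hv] using hc
    have hmem : s ∈ I := by
      rwa [Ideal.Quotient.mkₐ_eq_mk, Ideal.Quotient.eq_zero_iff_mem] at hmk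
    have hτ : WPFAux.τ n s = 0 := by
      ext m
      rw [WPFAux.coeff_τ, hs, coeff_sum, map_zero]
      rw [dif_neg (by omega)]
    have hs0 : s = 0 := uniqueness s hτ hmem
    intro i
    have := congrArg (coeff (i : ℕ)) hs0
    rw [hs, coeff_sum, dif_pos i.isLt] at this
    simpa using this
  have hspan : ⊤ ≤ Submodule.span ℤ_[p] (Set.range v) := by
    rintro y -
    obtain ⟨g, rfl⟩ := Ideal.Quotient.mk_surjective (I := I) y
    obtain ⟨q, hq⟩ := division g
    set r : PowerSeries ℤ_[p] := g - q * F with hr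
    have hgr : Ideal.Quotient.mk I g = Ideal.Quotient.mk I r := by
      rw [Ideal.Quotient.eq]
      have : g - r = q * F := by rw [hr]; ring
      rw [this, hI]
      exact Ideal.mem_span_singleton'.2 ⟨q, rfl⟩
    rw [hgr, tau_zero_eq_sum r hq, map_sum]
    refine Submodule.sum_mem _ fun i _ => ?_
    have : (Ideal.Quotient.mk I) ((coeff (i : ℕ) r) • (X : PowerSeries ℤ_[p]) ^ (i : ℕ))
        = (coeff (i : ℕ) r) • v i := by
      rw [hv, ← Ideal.Quotient.mkₐ_eq_mk ℤ_[p] I, map_smul]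
    rw [this]
    exact Submodule.smul_mem _ _ (Submodule.subset_span ⟨i, rfl⟩)
  let b : Module.Basis (Fin n) ℤ_[p] (PowerSeries ℤ_[p] ⧸ I) := Module.Basis.mk hli hspan
  exact ⟨Module.Free.of_basis b, by rw [Module.finrank_eq_card_basis b, Fintype.card_fin]⟩
end
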